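/- Let q be a nonnegative continuous function on [0,∞) with ∫₀^∞ t·q(t) dt < ∞, let h ∈ C¹((0,∞)) solve h' + h² − q = 0 with lim_{t→0⁺} t·h(t) = 1, and let v ∈ C²((0,∞)) solve v'' + h·v' = 0 with v' > 0 and lim_{t→0⁺} v(t)/log t = 1. Then the limit lim_{t→∞} v(t)/log t exists and satisfies 1/I(q) ≤ lim_{t→∞} v(t)/log t ≤ 1, where I(q) = exp(∫₀^∞ s·q(s) ds). Moreover, for every t > 1 one has (1/I(q))·log t + v(1) ≤ v(t) ≤ log t + v(1). -/

import Mathlib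

open MeasureTheory Set Filter


lemma aux_sub : ∀ a b : ℝ, 0 < a → 0 < b → Set.uIcc a b ⊆ Set.Ioi (0:ℝ) :=
  fun a b ha hb x hx => lt_of_lt_of_le (lt_min ha hb) hx.1

lemma aux_ftc (v v' : ℝ → ℝ)
    (hv' : ∀ t ∈ Set.Ioi (0:ℝ), HasDerivAt v (v' t) t)
    (hv'_cont : ContinuousOn v' (Set.Ioi 0))
    (s t : ℝ) (hs : 0 < s) (ht : 0 < t) :
    v t - v s = ∫ x in s..t, v' x := by
  rw [intervalIntegral.integral_eq_sub_of_hasDerivAt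
    (fun x hx => hv' x (aux_sub s t hs ht hx))
    ((hv'_cont.mono (aux_sub s t hs ht)).intervalIntegrable)]

lemma aux_invint (c s t : ℝ) (hs : 0 < s) (ht : 0 < t) :
    ∫ x in s..t, c * x⁻¹ = c * (Real.log t - Real.log s) := by
  rw [intervalIntegral.integral_const_mul, integral_inv_of_pos hs ht,
    Real.log_div (ne_of_gt ht) (ne_of_gt hs)]

lemma aux_div_lim (C : ℝ) :
    Filter.Tendsto (fun s => C / Real.log s) (nhdsWithin 0 (Set.Ioi 0)) (nhds 0) := by
  have hneg : Filter.Tendsto (fun s => -Real.log s) (nhdsWithin 0 (Set.Ioi 0)) Filter.atTop :=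
    Filter.tendsto_neg_atBot_atTop.comp Real.tendsto_log_nhdsGT_zero
  have h1 : Filter.Tendsto (fun s => (Real.log s)⁻¹) (nhdsWithin 0 (Set.Ioi 0)) (nhds 0) := by
    have h0 := hneg.inv_tendsto_atTop.neg
    have : (fun s => -(-Real.log s)⁻¹) = fun s => (Real.log s)⁻¹ := by
      funext s; rw [inv_neg, neg_neg]
    rw [neg_zero] at h0
    convert h0 using 1
    exact this.symm
  have := h1.const_mul C
  simpa [div_eq_mul_inv] using this

-- if v s ≤ C + c * log s for s near 0+, then 1 ≤ c  (comes from v/log → 1)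
lemma aux_le_of_bound (v : ℝ → ℝ) (C c t₁ : ℝ) (ht₁ : 0 < t₁)
    (hlimv : Filter.Tendsto (fun t => v t / Real.log t) (nhdsWithin 0 (Set.Ioi 0)) (nhds 1))
    (hb : ∀ s ∈ Set.Ioo (0:ℝ) t₁, v s ≤ C + c * Real.log s) : c ≤ 1 := by
  by_contra hc
  push_neg at hc
  have hmid : (1:ℝ) < (1 + c)/2 := by linarith
  have hmid2 : (1 + c)/2 < c := by linarith
  have e1 : ∀ᶠ s in nhdsWithin (0:ℝ) (Set.Ioi 0), v s / Real.log s < (1+c)/2 :=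
    hlimv.eventually (eventually_lt_nhds hmid)
  have e2 : ∀ᶠ s in nhdsWithin (0:ℝ) (Set.Ioi 0), (1+c)/2 < C / Real.log s + c := by
    have h2 := (aux_div_lim C).add_const c
    rw [zero_add] at h2
    exact h2.eventually (eventually_gt_nhds hmid2)
  have e3 : Set.Ioo (0:ℝ) (min t₁ 1) ∈ nhdsWithin (0:ℝ) (Set.Ioi 0) :=
    Ioo_mem_nhdsGT_of_mem ⟨le_refl 0, lt_min ht₁ one_pos⟩
  have : ∀ᶠ s in nhdsWithin (0:ℝ) (Set.Ioi 0), False := by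
    filter_upwards [e1, e2, e3] with s h1 h2 h3
    have hs0 : 0 < s := h3.1
    have hs1 : s < 1 := lt_of_lt_of_le h3.2 (min_le_right _ _)
    have hst : s < t₁ := lt_of_lt_of_le h3.2 (min_le_left _ _)
    have hlog : Real.log s < 0 := Real.log_neg hs0 hs1
    have hvb : v s ≤ C + c * Real.log s := hb s ⟨hs0, hst⟩
    have : (C + c * Real.log s) / Real.log s ≤ v s / Real.log s :=
      div_le_div_of_nonpos_of_le hlog.le hvb
    rw [add_div, mul_div_assoc, div_self (ne_of_lt hlog)] at this
    simp only [mul_one] at this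
    linarith
  exact absurd (this.exists.choose_spec) (by simp)

-- if C + c * log s ≤ v s for s near 0+, then c ≥ 1
lemma aux_ge_of_bound (v : ℝ → ℝ) (C c t₁ : ℝ) (ht₁ : 0 < t₁)
    (hlimv : Filter.Tendsto (fun t => v t / Real.log t) (nhdsWithin 0 (Set.Ioi 0)) (nhds 1))
    (hb : ∀ s ∈ Set.Ioo (0:ℝ) t₁, C + c * Real.log s ≤ v s) : 1 ≤ c := by
  by_contra hc
  push_neg at hc
  have hmid : (1 + c)/2 < 1 := by linarith
  have hmid2 : c < (1 + c)/2 := by linarith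
  have e1 : ∀ᶠ s in nhdsWithin (0:ℝ) (Set.Ioi 0), (1+c)/2 < v s / Real.log s :=
    hlimv.eventually (eventually_gt_nhds hmid)
  have e2 : ∀ᶠ s in nhdsWithin (0:ℝ) (Set.Ioi 0), C / Real.log s + c < (1+c)/2 := by
    have h2 := (aux_div_lim C).add_const c
    rw [zero_add] at h2
    exact h2.eventually (eventually_lt_nhds hmid2)
  have e3 : Set.Ioo (0:ℝ) (min t₁ 1) ∈ nhdsWithin (0:ℝ) (Set.Ioi 0) :=
    Ioo_mem_nhdsGT_of_mem ⟨le_refl 0, lt_min ht₁ one_pos⟩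
  have : ∀ᶠ s in nhdsWithin (0:ℝ) (Set.Ioi 0), False := by
    filter_upwards [e1, e2, e3] with s h1 h2 h3
    have hs0 : 0 < s := h3.1
    have hs1 : s < 1 := lt_of_lt_of_le h3.2 (min_le_right _ _)
    have hst : s < t₁ := lt_of_lt_of_le h3.2 (min_le_left _ _)
    have hlog : Real.log s < 0 := Real.log_neg hs0 hs1
    have hvb : C + c * Real.log s ≤ v s := hb s ⟨hs0, hst⟩
    have : v s / Real.log s ≤ (C + c * Real.log s) / Real.log s :=
      div_le_div_of_nonpos_of_le hlog.le hvb
    rw [add_div, mul_div_assoc, div_self (ne_of_lt hlog)] at this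
    simp only [mul_one] at this
    linarith
  exact absurd (this.exists.choose_spec) (by simp)

lemma aux_cinv (c : ℝ) : ContinuousOn (fun x : ℝ => c * x⁻¹) (Set.Ioi 0) :=
  continuousOn_const.mul (continuousOn_id.inv₀ fun x hx => ne_of_gt hx)

lemma aux_f_le_one (v v' : ℝ → ℝ)
    (hv' : ∀ t ∈ Set.Ioi (0:ℝ), HasDerivAt v (v' t) t)
    (hv'_cont : ContinuousOn v' (Set.Ioi 0))
    (hv'_pos : ∀ t ∈ Set.Ioi (0:ℝ), 0 < v' t)
    (hanti : AntitoneOn (fun t => t * v' t) (Set.Ioi 0))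
    (hlimv : Filter.Tendsto (fun t => v t / Real.log t) (nhdsWithin 0 (Set.Ioi 0)) (nhds 1)) :
    ∀ t ∈ Set.Ioi (0:ℝ), t * v' t ≤ 1 := by
  intro t0 ht0
  set c := t0 * v' t0 with hc
  by_contra hcon
  push_neg at hcon
  set t₁ := min t0 (1/2) with ht₁def
  have ht₁pos : 0 < t₁ := lt_min ht0 (by norm_num)
  have ht₁le : t₁ ≤ t0 := min_le_left _ _
  have hb : ∀ s ∈ Set.Ioo (0:ℝ) t₁, v s ≤ (v t₁ - c * Real.log t₁) + c * Real.log s := by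
    intro s hs
    have hs0 : 0 < s := hs.1
    have hst : s ≤ t₁ := hs.2.le
    have hftc := aux_ftc v v' hv' hv'_cont s t₁ hs0 ht₁pos
    have hcomp : ∫ x in s..t₁, c * x⁻¹ ≤ ∫ x in s..t₁, v' x := by
      apply intervalIntegral.integral_mono_on hst
      · apply ContinuousOn.intervalIntegrable
        exact (aux_cinv c).mono (aux_sub s t₁ hs0 ht₁pos)
      · exact (hv'_cont.mono (aux_sub s t₁ hs0 ht₁pos)).intervalIntegrable
      · intro x hx
        have hx0 : 0 < x := lt_of_lt_of_le hs0 hx.1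
        have hxt0 : x ≤ t0 := le_trans hx.2 ht₁le
        have := hanti (Set.mem_Ioi.mpr hx0) ht0 hxt0
        rw [mul_comm, inv_mul_eq_div, div_le_iff₀ hx0, mul_comm]
        exact this
    rw [aux_invint c s t₁ hs0 ht₁pos] at hcomp
    linarith [hftc ▸ hcomp]
  have := aux_le_of_bound v (v t₁ - c * Real.log t₁) c t₁ ht₁pos hlimv hb
  linarith

lemma aux_f_to_one (v v' : ℝ → ℝ)
    (hv' : ∀ t ∈ Set.Ioi (0:ℝ), HasDerivAt v (v' t) t)
    (hv'_cont : ContinuousOn v' (Set.Ioi 0))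
    (hv'_pos : ∀ t ∈ Set.Ioi (0:ℝ), 0 < v' t)
    (hanti : AntitoneOn (fun t => t * v' t) (Set.Ioi 0))
    (hle : ∀ t ∈ Set.Ioi (0:ℝ), t * v' t ≤ 1)
    (hlimv : Filter.Tendsto (fun t => v t / Real.log t) (nhdsWithin 0 (Set.Ioi 0)) (nhds 1)) :
    Filter.Tendsto (fun t => t * v' t) (nhdsWithin 0 (Set.Ioi 0)) (nhds 1) := by
  rw [tendsto_order]
  constructor
  · intro a ha
    -- find s₀ with a < f s₀
    have hex : ∃ s₀, 0 < s₀ ∧ a < s₀ * v' s₀ := by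
      by_contra hcon
      push_neg at hcon
      have hb : ∀ s ∈ Set.Ioo (0:ℝ) (1/2),
          (v (1/2) - a * Real.log (1/2)) + a * Real.log s ≤ v s := by
        intro s hs
        have hs0 : 0 < s := hs.1
        have hst : s ≤ 1/2 := hs.2.le
        have hhalf : (0:ℝ) < 1/2 := by norm_num
        have hftc := aux_ftc v v' hv' hv'_cont s (1/2) hs0 hhalf
        have hcomp : ∫ x in s..(1/2:ℝ), v' x ≤ ∫ x in s..(1/2:ℝ), a * x⁻¹ := by
          apply intervalIntegral.integral_mono_on hst
          · exact (hv'_cont.mono (aux_sub s (1/2) hs0 hhalf)).intervalIntegrable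
          · apply ContinuousOn.intervalIntegrable
            exact (aux_cinv a).mono (aux_sub s (1/2) hs0 hhalf)
          · intro x hx
            have hx0 : 0 < x := lt_of_lt_of_le hs0 hx.1
            have := hcon x hx0
            rw [mul_comm, inv_mul_eq_div, le_div_iff₀ hx0, mul_comm]
            exact this
        rw [aux_invint a s (1/2) hs0 hhalf] at hcomp
        linarith [hftc ▸ hcomp]
      have := aux_ge_of_bound v (v (1/2) - a * Real.log (1/2)) a (1/2) (by norm_num) hlimv hb
      linarith
    obtain ⟨s₀, hs₀pos, hs₀⟩ := hex
    filter_upwards [Ioo_mem_nhdsGT_of_mem (Set.left_mem_Ico.mpr hs₀pos)] with s hs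
    calc a < s₀ * v' s₀ := hs₀
    _ ≤ s * v' s := hanti (Set.mem_Ioi.mpr hs.1) (Set.mem_Ioi.mpr hs₀pos) hs.2.le
  · intro a ha
    filter_upwards [self_mem_nhdsWithin] with s hs
    exact lt_of_le_of_lt (hle s hs) ha

lemma aux_m_ge_one (q h h' : ℝ → ℝ)
    (hh' : ∀ t ∈ Set.Ioi (0:ℝ), HasDerivAt h (h' t) t)
    (hq_nonneg : ∀ t ∈ Set.Ici (0:ℝ), 0 ≤ q t)
    (hric : ∀ t ∈ Set.Ioi (0:ℝ), h' t + (h t)^2 - q t = 0)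
    (hlimh : Filter.Tendsto (fun t => t * h t) (nhdsWithin 0 (Set.Ioi 0)) (nhds 1)) :
    ∀ t ∈ Set.Ioi (0:ℝ), 1 ≤ t * h t := by
  have hh_cont : ContinuousOn h (Set.Ioi 0) :=
    fun t ht => (hh' t ht).continuousAt.continuousWithinAt
  have hsub : ∀ a b : ℝ, 0 < a → 0 < b → Set.uIcc a b ⊆ Set.Ioi (0:ℝ) := by
    intro a b ha hb x hx
    exact lt_of_lt_of_le (lt_min ha hb) hx.1
  have hint : ∀ a b : ℝ, 0 < a → 0 < b → IntervalIntegrable h volume a b := by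
    intro a b ha hb
    exact (hh_cont.mono (hsub a b ha hb)).intervalIntegrable
  set H : ℝ → ℝ := fun t => ∫ s in (1:ℝ)..t, h s with hHdef
  have hH : ∀ t ∈ Set.Ioi (0:ℝ), HasDerivAt H (h t) t := by
    intro t ht
    exact intervalIntegral.integral_hasDerivAt_right (hint 1 t one_pos ht)
      (ContinuousOn.stronglyMeasurableAtFilter isOpen_Ioi hh_cont t ht)
      (hh' t ht).continuousAt
  set u : ℝ → ℝ := fun t => Real.exp (H t) with hudef
  have hu_pos : ∀ t, 0 < u t := fun t => Real.exp_pos _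
  have hu' : ∀ t ∈ Set.Ioi (0:ℝ), HasDerivAt u (h t * u t) t := by
    intro t ht
    have := (hH t ht).exp
    simpa [hudef, mul_comm] using this
  set g : ℝ → ℝ := fun t => u t * (t * h t - 1) with hgdef
  have hg' : ∀ t ∈ Set.Ioi (0:ℝ), HasDerivAt g (t * q t * u t) t := by
    intro t ht
    have hm : HasDerivAt (fun s => s * h s - 1) (1 * h t + t * h' t) t := by
      simpa using ((hasDerivAt_id t).mul (hh' t ht)).sub_const 1
    have := (hu' t ht).mul hm
    have hq : h' t = q t - (h t)^2 := by have := hric t ht; linarith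
    refine this.congr_deriv ?_
    simp only [hq]
    ring
  -- g is monotone on Ioi 0
  have hg_cont : ContinuousOn g (Set.Ioi 0) :=
    fun t ht => (hg' t ht).continuousAt.continuousWithinAt
  have hg_mono : MonotoneOn g (Set.Ioi 0) := by
    apply monotoneOn_of_deriv_nonneg (convex_Ioi 0) hg_cont
    · intro x hx
      rw [interior_Ioi] at hx
      exact (hg' x hx).differentiableAt.differentiableWithinAt
    · intro x hx
      rw [interior_Ioi] at hx
      rw [(hg' x hx).deriv]
      have hq0 : 0 ≤ q x := hq_nonneg x (Set.mem_Ici.mpr (le_of_lt hx))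
      exact mul_nonneg (mul_nonneg hx.le hq0) (hu_pos x).le
  -- u is bounded near 0
  have hhpos : ∀ᶠ t in nhdsWithin (0:ℝ) (Set.Ioi 0), 0 < h t := by
    have := hlimh (Ioi_mem_nhds (by norm_num : (1:ℝ)/2 < 1))
    filter_upwards [this, self_mem_nhdsWithin] with t ht ht0
    have ht0' : (0:ℝ) < t := ht0
    have h2 : (1:ℝ)/2 < t * h t := ht
    nlinarith [h2, ht0']
  obtain ⟨δ, hδpos, hδ⟩ : ∃ δ > 0, ∀ t ∈ Set.Ioc (0:ℝ) δ, 0 < h t := by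
    rw [eventually_nhdsWithin_iff] at hhpos
    rcases Metric.eventually_nhds_iff.mp hhpos with ⟨ε, hε, hb⟩
    refine ⟨ε/2, by linarith, fun t ht => ?_⟩
    have : dist t 0 < ε := by
      rw [Real.dist_eq, sub_zero, abs_of_pos ht.1]; linarith [ht.2]
    exact hb this ht.1
  have hu_bdd : ∀ t ∈ Set.Ioc (0:ℝ) δ, u t ≤ u δ := by
    intro t ht
    have h1 : H δ - H t = ∫ s in t..δ, h s := by
      rw [hHdef]
      have := intervalIntegral.integral_add_adjacent_intervals
        (hint 1 t one_pos ht.1) (hint t δ ht.1 hδpos)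
      linarith [this]
    have h2 : 0 ≤ ∫ s in t..δ, h s := by
      apply intervalIntegral.integral_nonneg ht.2
      intro x hx
      exact le_of_lt (hδ x ⟨lt_of_lt_of_le ht.1 hx.1, hx.2⟩)
    have : H t ≤ H δ := by linarith
    exact Real.exp_le_exp.mpr this
  -- g tends to 0 at 0+
  have hg0 : Filter.Tendsto g (nhdsWithin 0 (Set.Ioi 0)) (nhds 0) := by
    have habs : Filter.Tendsto (fun t => u δ * |t * h t - 1|) (nhdsWithin 0 (Set.Ioi 0)) (nhds 0) := by
      have h1 : Filter.Tendsto (fun t => t * h t - 1) (nhdsWithin 0 (Set.Ioi 0)) (nhds 0) := by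
        simpa using hlimh.sub_const 1
      have := (h1.abs).const_mul (u δ)
      simpa using this
    have hbound : ∀ᶠ t in nhdsWithin (0:ℝ) (Set.Ioi 0), |g t| ≤ u δ * |t * h t - 1| := by
      filter_upwards [Ioo_mem_nhdsGT_of_mem (Set.left_mem_Ico.mpr hδpos)] with t ht
      rw [hgdef]
      rw [abs_mul, abs_of_pos (hu_pos t)]
      exact mul_le_mul_of_nonneg_right (hu_bdd t ⟨ht.1, le_of_lt ht.2⟩) (abs_nonneg _)
    have h0 : Filter.Tendsto (fun t => |g t|) (nhdsWithin 0 (Set.Ioi 0)) (nhds 0) :=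
      squeeze_zero' (Filter.Eventually.of_forall (fun t => abs_nonneg _)) hbound habs
    exact (tendsto_zero_iff_abs_tendsto_zero g).mpr h0
  -- conclude
  intro t ht
  have hg_nonneg : 0 ≤ g t := by
    apply le_of_tendsto hg0
    filter_upwards [Ioo_mem_nhdsGT_of_mem (Set.left_mem_Ico.mpr ht)] with s hs
    exact hg_mono (Set.mem_Ioi.mpr hs.1) ht (le_of_lt hs.2)
  by_contra hc
  push_neg at hc
  have hneg : g t < 0 := by
    have : u t * (t * h t - 1) < 0 :=
      mul_neg_of_pos_of_neg (hu_pos t) (by linarith)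
    simpa [hgdef] using this
  linarith

lemma aux_f_anti (h v' v'' : ℝ → ℝ)
    (hv'' : ∀ t ∈ Set.Ioi (0:ℝ), HasDerivAt v' (v'' t) t)
    (hodev : ∀ t ∈ Set.Ioi (0:ℝ), v'' t + h t * v' t = 0)
    (hv'_pos : ∀ t ∈ Set.Ioi (0:ℝ), 0 < v' t)
    (hm : ∀ t ∈ Set.Ioi (0:ℝ), 1 ≤ t * h t) :
    AntitoneOn (fun t => t * v' t) (Set.Ioi 0) := by
  have hf' : ∀ t ∈ Set.Ioi (0:ℝ), HasDerivAt (fun s => s * v' s) (v' t * (1 - t * h t)) t := by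
    intro t ht
    have := (hasDerivAt_id t).mul (hv'' t ht)
    have hv''eq : v'' t = -(h t * v' t) := by have := hodev t ht; linarith
    refine this.congr_deriv ?_
    rw [hv''eq]; simp only [id_eq]; ring
  apply antitoneOn_of_deriv_nonpos (convex_Ioi 0)
  · exact fun t ht => (hf' t ht).continuousAt.continuousWithinAt
  · intro x hx
    rw [interior_Ioi] at hx
    exact (hf' x hx).differentiableAt.differentiableWithinAt
  · intro x hx
    rw [interior_Ioi] at hx
    rw [(hf' x hx).deriv]
    have h1 : 1 ≤ x * h x := hm x hx
    have h2 : 0 < v' x := hv'_pos x hx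
    nlinarith

lemma aux_f_lower (q h h' v' v'' : ℝ → ℝ)
    (hq_nonneg : ∀ t ∈ Set.Ici (0:ℝ), 0 ≤ q t)
    (hq_cont : ContinuousOn q (Set.Ici 0))
    (hq_int : MeasureTheory.IntegrableOn (fun t => t * q t) (Set.Ici 0))
    (hh' : ∀ t ∈ Set.Ioi (0:ℝ), HasDerivAt h (h' t) t)
    (hh'_cont : ContinuousOn h' (Set.Ioi 0))
    (hric : ∀ t ∈ Set.Ioi (0:ℝ), h' t + (h t)^2 - q t = 0)
    (hlimh : Filter.Tendsto (fun t => t * h t) (nhdsWithin 0 (Set.Ioi 0)) (nhds 1))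
    (hv'' : ∀ t ∈ Set.Ioi (0:ℝ), HasDerivAt v' (v'' t) t)
    (hodev : ∀ t ∈ Set.Ioi (0:ℝ), v'' t + h t * v' t = 0)
    (hv'_pos : ∀ t ∈ Set.Ioi (0:ℝ), 0 < v' t)
    (hm : ∀ t ∈ Set.Ioi (0:ℝ), 1 ≤ t * h t)
    (hf1 : Filter.Tendsto (fun t => t * v' t) (nhdsWithin 0 (Set.Ioi 0)) (nhds 1)) :
    ∀ t ∈ Set.Ioi (0:ℝ), Real.exp (-(∫ s in Set.Ici (0:ℝ), s * q s)) ≤ t * v' t := by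
  set J := ∫ s in Set.Ici (0:ℝ), s * q s with hJdef
  have hh_cont : ContinuousOn h (Set.Ioi 0) :=
    fun t ht => (hh' t ht).continuousAt.continuousWithinAt
  have hv'_cont : ContinuousOn v' (Set.Ioi 0) :=
    fun t ht => (hv'' t ht).continuousAt.continuousWithinAt
  have hfpos : ∀ r ∈ Set.Ioi (0:ℝ), 0 < r * v' r :=
    fun r hr => mul_pos hr (hv'_pos r hr)
  -- derivative of L = log (r * v' r)
  have hL' : ∀ r ∈ Set.Ioi (0:ℝ),
      HasDerivAt (fun x => Real.log (x * v' x)) ((1 - r * h r)/r) r := by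
    intro r hr
    have hf' : HasDerivAt (fun s => s * v' s) (v' r * (1 - r * h r)) r := by
      have := (hasDerivAt_id r).mul (hv'' r hr)
      have hv''eq : v'' r = -(h r * v' r) := by have := hodev r hr; linarith
      refine this.congr_deriv ?_
      rw [hv''eq]; simp only [id_eq]; ring
    have := hf'.log (ne_of_gt (hfpos r hr))
    convert this using 1
    have hr0 : (r:ℝ) ≠ 0 := ne_of_gt hr
    have hv0 : v' r ≠ 0 := ne_of_gt (hv'_pos r hr)
    field_simp
  -- derivative of m = r * h r
  have hm' : ∀ r ∈ Set.Ioi (0:ℝ), HasDerivAt (fun x => x * h x) (h r + r * h' r) r := by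
    intro r hr
    have := (hasDerivAt_id r).mul (hh' r hr)
    exact this.congr_deriv (by simp)
  intro t ht
  have key : ∀ s ∈ Set.Ioo (0:ℝ) t,
      Real.log (s * v' s) - (s * h s - 1) - J ≤ Real.log (t * v' t) := by
    intro s hs
    have hs0 : 0 < s := hs.1
    have hst : s ≤ t := hs.2.le
    have hsubst : Set.uIcc s t ⊆ Set.Ioi (0:ℝ) := aux_sub s t hs0 ht
    -- FTC for L
    have hLint : IntervalIntegrable (fun r => (1 - r * h r)/r) volume s t := by
      apply ContinuousOn.intervalIntegrable
      apply ContinuousOn.div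
      · exact (continuousOn_const.sub (continuousOn_id.mul (hh_cont.mono hsubst)))
      · exact continuousOn_id.mono hsubst
      · exact fun x hx => ne_of_gt (hsubst hx)
    have hLftc : Real.log (t * v' t) - Real.log (s * v' s)
        = ∫ r in s..t, (1 - r * h r)/r :=
      (intervalIntegral.integral_eq_sub_of_hasDerivAt (fun x hx => hL' x (hsubst hx)) hLint).symm
    -- FTC for m
    have hm'int : IntervalIntegrable (fun r => h r + r * h' r) volume s t := by
      apply ContinuousOn.intervalIntegrable
      exact ((hh_cont.mono hsubst).add (((continuousOn_id).mono hsubst).mul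
        (hh'_cont.mono hsubst)))
    have hmftc : t * h t - s * h s = ∫ r in s..t, (h r + r * h' r) :=
      (intervalIntegral.integral_eq_sub_of_hasDerivAt (fun x hx => hm' x (hsubst hx)) hm'int).symm
    -- q integrand integrable
    have hIcc : Set.uIcc s t ⊆ Set.Ici (0:ℝ) := fun x hx => Set.mem_Ici.mpr (le_of_lt (hsubst hx))
    have hqint : IntervalIntegrable (fun r => r * q r) volume s t := by
      apply ContinuousOn.intervalIntegrable
      exact (continuousOn_id.mono hIcc).mul (hq_cont.mono hIcc)
    -- pointwise bound: (m r - 1)/r ≤ r * q r - (h r + r * h' r)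
    have hptwise : ∀ r ∈ Set.Icc s t, (r * h r - 1)/r ≤ r * q r - (h r + r * h' r) := by
      intro r hr
      have hr0 : 0 < r := lt_of_lt_of_le hs0 hr.1
      have hmr : 1 ≤ r * h r := hm r hr0
      have hq : h' r = q r - (h r)^2 := by have := hric r hr0; linarith
      rw [div_le_iff₀ hr0, hq]
      nlinarith [hmr]
    -- integral comparison
    have hcomp : ∫ r in s..t, (r * h r - 1)/r
        ≤ (∫ r in s..t, r * q r) - (t * h t - s * h s) := by
      rw [hmftc, ← intervalIntegral.integral_sub hqint hm'int]
      apply intervalIntegral.integral_mono_on hst _ (hqint.sub hm'int) hptwise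
      · apply ContinuousOn.intervalIntegrable
        apply ContinuousOn.div
        · exact ((continuousOn_id.mono hsubst).mul (hh_cont.mono hsubst)).sub continuousOn_const
        · exact continuousOn_id.mono hsubst
        · exact fun x hx => ne_of_gt (hsubst hx)
    -- ∫ r q r over [s,t] ≤ J
    have hqJ : (∫ r in s..t, r * q r) ≤ J := by
      rw [intervalIntegral.integral_of_le hst, hJdef]
      apply setIntegral_mono_set hq_int
      · filter_upwards [ae_restrict_mem measurableSet_Ici] with x hx
        exact mul_nonneg hx (hq_nonneg x hx)
      · apply HasSubset.Subset.eventuallyLE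
        intro x hx
        exact le_of_lt (lt_trans hs0 hx.1)
    -- the integrand identity: (1 - m)/r = -((m-1)/r)
    have hneg : ∫ r in s..t, (1 - r * h r)/r = -∫ r in s..t, (r * h r - 1)/r := by
      rw [← intervalIntegral.integral_neg]
      congr 1
      funext r
      ring
    have hmt : 1 ≤ t * h t := hm t ht
    rw [hneg] at hLftc
    linarith [hcomp, hqJ, hLftc]
  -- limit as s → 0+
  have hlim : Filter.Tendsto (fun s => Real.log (s * v' s) - (s * h s - 1) - J)
      (nhdsWithin 0 (Set.Ioi 0)) (nhds (-J)) := by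
    have h1 : Filter.Tendsto (fun s => Real.log (s * v' s)) (nhdsWithin 0 (Set.Ioi 0)) (nhds 0) := by
      have := (Real.continuousAt_log one_ne_zero).tendsto.comp hf1
      rw [Real.log_one] at this; exact this
    have h2 : Filter.Tendsto (fun s => s * h s - 1) (nhdsWithin 0 (Set.Ioi 0)) (nhds 0) := by
      simpa using hlimh.sub_const 1
    have := (h1.sub h2).sub_const J
    simpa using this
  have hlogle : -J ≤ Real.log (t * v' t) := by
    apply le_of_tendsto hlim
    filter_upwards [Ioo_mem_nhdsGT_of_mem (Set.left_mem_Ico.mpr ht)] with s hs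
    exact key s hs
  calc Real.exp (-J) ≤ Real.exp (Real.log (t * v' t)) := Real.exp_le_exp.mpr hlogle
  _ = t * v' t := Real.exp_log (hfpos t ht)

lemma aux_lower_int (v v' : ℝ → ℝ)
    (hv' : ∀ t ∈ Set.Ioi (0:ℝ), HasDerivAt v (v' t) t)
    (hv'_cont : ContinuousOn v' (Set.Ioi 0))
    (c s t : ℝ) (hs : 0 < s) (hst : s ≤ t)
    (hb : ∀ x ∈ Set.Icc s t, c ≤ x * v' x) :
    c * (Real.log t - Real.log s) ≤ v t - v s := by
  have ht : 0 < t := lt_of_lt_of_le hs hst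
  rw [aux_ftc v v' hv' hv'_cont s t hs ht, ← aux_invint c s t hs ht]
  apply intervalIntegral.integral_mono_on hst
  · exact ((aux_cinv c).mono (aux_sub s t hs ht)).intervalIntegrable
  · exact (hv'_cont.mono (aux_sub s t hs ht)).intervalIntegrable
  · intro x hx
    have hx0 : 0 < x := lt_of_lt_of_le hs hx.1
    rw [mul_comm, inv_mul_eq_div, div_le_iff₀ hx0, mul_comm]
    exact hb x hx

lemma aux_upper_int (v v' : ℝ → ℝ)
    (hv' : ∀ t ∈ Set.Ioi (0:ℝ), HasDerivAt v (v' t) t)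
    (hv'_cont : ContinuousOn v' (Set.Ioi 0))
    (c s t : ℝ) (hs : 0 < s) (hst : s ≤ t)
    (hb : ∀ x ∈ Set.Icc s t, x * v' x ≤ c) :
    v t - v s ≤ c * (Real.log t - Real.log s) := by
  have ht : 0 < t := lt_of_lt_of_le hs hst
  rw [aux_ftc v v' hv' hv'_cont s t hs ht, ← aux_invint c s t hs ht]
  apply intervalIntegral.integral_mono_on hst
  · exact (hv'_cont.mono (aux_sub s t hs ht)).intervalIntegrable
  · exact ((aux_cinv c).mono (aux_sub s t hs ht)).intervalIntegrable
  · intro x hx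
    have hx0 : 0 < x := lt_of_lt_of_le hs hx.1
    rw [mul_comm, inv_mul_eq_div, le_div_iff₀ hx0, mul_comm]
    exact hb x hx


/-- Let `q` be a nonnegative continuous function on `[0,∞)` with
`∫₀^∞ t·q t dt < ∞` and set `I(q) = exp(∫₀^∞ s·q s ds)`. Let `h ∈ C¹((0,∞))` solve
`h' + h² − q = 0` with `lim_{t→0⁺} t·h t = 1`, and let `v ∈ C²((0,∞))` solve
`v'' + h·v' = 0` with `v' > 0` and `lim_{t→0⁺} v t / log t = 1`. Then
`lim_{t→∞} v t / log t` exists and lies in `[1/I(q), 1]`, and for every `t > 1`,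
`(1/I(q))·log t + v 1 ≤ v t ≤ log t + v 1`. -/
theorem stmt7 (q h h' v v' v'' : ℝ → ℝ)
    (hq_cont : ContinuousOn q (Set.Ici 0))
    (hq_nonneg : ∀ t ∈ Set.Ici (0:ℝ), 0 ≤ q t)
    (hq_int : MeasureTheory.IntegrableOn (fun t => t * q t) (Set.Ici 0))
    (hh' : ∀ t ∈ Set.Ioi (0:ℝ), HasDerivAt h (h' t) t)
    (hh'_cont : ContinuousOn h' (Set.Ioi 0))
    (hric : ∀ t ∈ Set.Ioi (0:ℝ), h' t + (h t)^2 - q t = 0)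
    (hlimh : Filter.Tendsto (fun t => t * h t) (nhdsWithin 0 (Set.Ioi 0)) (nhds 1))
    (hv' : ∀ t ∈ Set.Ioi (0:ℝ), HasDerivAt v (v' t) t)
    (hv'' : ∀ t ∈ Set.Ioi (0:ℝ), HasDerivAt v' (v'' t) t)
    (hv''_cont : ContinuousOn v'' (Set.Ioi 0))
    (hodev : ∀ t ∈ Set.Ioi (0:ℝ), v'' t + h t * v' t = 0)
    (hv'_pos : ∀ t ∈ Set.Ioi (0:ℝ), 0 < v' t)
    (hlimv : Filter.Tendsto (fun t => v t / Real.log t) (nhdsWithin 0 (Set.Ioi 0)) (nhds 1)) :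
    (∃ α : ℝ, Filter.Tendsto (fun t => v t / Real.log t) Filter.atTop (nhds α) ∧
        1 / Real.exp (∫ s in Set.Ici (0:ℝ), s * q s) ≤ α ∧ α ≤ 1) ∧
      ∀ t > (1:ℝ),
        (1 / Real.exp (∫ s in Set.Ici (0:ℝ), s * q s)) * Real.log t + v 1 ≤ v t ∧
          v t ≤ Real.log t + v 1 := by
  have hv'_cont : ContinuousOn v' (Set.Ioi 0) :=
    fun t ht => (hv'' t ht).continuousAt.continuousWithinAt
  have hm := aux_m_ge_one q h h' hh' hq_nonneg hric hlimh
  have hanti := aux_f_anti h v' v'' hv'' hodev hv'_pos hm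
  have hle1 := aux_f_le_one v v' hv' hv'_cont hv'_pos hanti hlimv
  have hf1 := aux_f_to_one v v' hv' hv'_cont hv'_pos hanti hle1 hlimv
  have hflow := aux_f_lower q h h' v' v'' hq_nonneg hq_cont hq_int hh' hh'_cont hric hlimh
    hv'' hodev hv'_pos hm hf1
  set J := ∫ s in Set.Ici (0:ℝ), s * q s with hJdef
  have hEJ : 1 / Real.exp J = Real.exp (-J) := by rw [Real.exp_neg, one_div]
  -- part 2
  have part2 : ∀ t > (1:ℝ), Real.exp (-J) * Real.log t + v 1 ≤ v t ∧ v t ≤ Real.log t + v 1 := by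
    intro t htgt
    have hst : (1:ℝ) ≤ t := htgt.le
    constructor
    · have := aux_lower_int v v' hv' hv'_cont (Real.exp (-J)) 1 t one_pos hst
        (fun x hx => hflow x (lt_of_lt_of_le one_pos hx.1))
      rw [Real.log_one] at this; linarith
    · have := aux_upper_int v v' hv' hv'_cont 1 1 t one_pos hst
        (fun x hx => hle1 x (lt_of_lt_of_le one_pos hx.1))
      rw [Real.log_one] at this; linarith
  -- the limit
  set F : ℝ → ℝ := fun x => (max x 1) * v' (max x 1) with hFdef
  have hmaxpos : ∀ x : ℝ, (0:ℝ) < max x 1 := fun x => lt_of_lt_of_le one_pos (le_max_right _ _)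
  have hFanti : Antitone F := by
    intro a b hab
    exact hanti (Set.mem_Ioi.mpr (hmaxpos a)) (Set.mem_Ioi.mpr (hmaxpos b))
      (max_le_max hab (le_refl 1))
  have hFbdd : BddBelow (Set.range F) := by
    refine ⟨Real.exp (-J), ?_⟩
    rintro y ⟨x, rfl⟩
    exact hflow _ (Set.mem_Ioi.mpr (hmaxpos x))
  set α := ⨅ x, F x with hαdef
  have htendF : Filter.Tendsto F Filter.atTop (nhds α) := tendsto_atTop_ciInf hFanti hFbdd
  have hαlow : Real.exp (-J) ≤ α := le_ciInf (fun x => hflow _ (Set.mem_Ioi.mpr (hmaxpos x)))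
  have hαhi : α ≤ 1 := by
    have h1 : α ≤ F 1 := ciInf_le hFbdd 1
    have : F 1 = 1 * v' 1 := by rw [hFdef]; simp
    rw [this] at h1
    have := hle1 1 (Set.mem_Ioi.mpr one_pos)
    simpa using h1.trans (by simpa using this)
  have hαle : ∀ r : ℝ, 1 ≤ r → α ≤ r * v' r := by
    intro r hr
    have h0 : α ≤ F r := ciInf_le hFbdd r
    have hFr : F r = r * v' r := by rw [hFdef]; simp [max_eq_left hr]
    rwa [hFr] at h0
  have hfa : Filter.Tendsto (fun x => x * v' x) Filter.atTop (nhds α) := by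
    apply htendF.congr'
    filter_upwards [eventually_ge_atTop (1:ℝ)] with x hx
    simp [hFdef, max_eq_left hx]
  have hmain : Filter.Tendsto (fun t => v t / Real.log t) Filter.atTop (nhds α) := by
    rw [Metric.tendsto_nhds]
    intro ε hε
    have hαε : α < α + ε/2 := by linarith
    obtain ⟨R, hfR, hR2⟩ :=
      ((hfa.eventually (eventually_lt_nhds hαε)).and (eventually_ge_atTop (2:ℝ))).exists
    have hRpos : (0:ℝ) < R := by linarith
    set C2 := v R - (α + ε/2) * Real.log R with hC2def
    have h3 : Filter.Tendsto (fun t => v 1 / Real.log t) Filter.atTop (nhds 0) :=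
      tendsto_const_nhds.div_atTop Real.tendsto_log_atTop
    have h4 : Filter.Tendsto (fun t => C2 / Real.log t) Filter.atTop (nhds 0) :=
      tendsto_const_nhds.div_atTop Real.tendsto_log_atTop
    have h3' : ∀ᶠ t in Filter.atTop, |v 1 / Real.log t| < ε/2 := by
      have := h3.abs
      rw [abs_zero] at this
      exact this.eventually (eventually_lt_nhds (by linarith))
    have h4' : ∀ᶠ t in Filter.atTop, |C2 / Real.log t| < ε/2 := by
      have := h4.abs
      rw [abs_zero] at this
      exact this.eventually (eventually_lt_nhds (by linarith))
    filter_upwards [eventually_ge_atTop R, eventually_ge_atTop (2:ℝ), h3', h4'] with t htR ht2 hb3 hb4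
    have ht1 : (1:ℝ) < t := by linarith
    have hlogpos : 0 < Real.log t := Real.log_pos ht1
    -- lower bound
    have hlow : v 1 + α * Real.log t ≤ v t := by
      have := aux_lower_int v v' hv' hv'_cont α 1 t one_pos ht1.le
        (fun x hx => hαle x hx.1)
      rw [Real.log_one] at this; linarith
    -- upper bound
    have hup : v t ≤ C2 + (α + ε/2) * Real.log t := by
      have := aux_upper_int v v' hv' hv'_cont (α + ε/2) R t hRpos htR
        (fun x hx => le_of_lt (lt_of_le_of_lt
          (hanti (Set.mem_Ioi.mpr hRpos) (Set.mem_Ioi.mpr (lt_of_lt_of_le hRpos hx.1)) hx.1) hfR))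
      rw [hC2def]; linarith
    rw [Real.dist_eq, abs_lt]
    have hlogne : Real.log t ≠ 0 := ne_of_gt hlogpos
    constructor
    · have hdiv : (v 1 + α * Real.log t) / Real.log t ≤ v t / Real.log t := by
        gcongr
      rw [add_div, mul_div_assoc, div_self hlogne, mul_one] at hdiv
      have := neg_abs_le (v 1 / Real.log t)
      linarith
    · have hdiv : v t / Real.log t ≤ (C2 + (α + ε/2) * Real.log t) / Real.log t := by
        gcongr
      rw [add_div, mul_div_assoc, div_self hlogne, mul_one] at hdiv
      have := le_abs_self (C2 / Real.log t)
      linarith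
  refine ⟨⟨α, hmain, ?_, hαhi⟩, ?_⟩
  · rw [hEJ]; exact hαlow
  · intro t ht
    rw [hEJ]
    exact part2 t ht
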